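/- Let μ be a natural number and let ν be a real number with ν = 0 or ν ≥ 1. Then for every t ∈ [0,1], (1−t)^ν · ∑_{ℓ=0}^{μ} binom(ν+ℓ−1, ℓ) · t^ℓ ≥ 1 − binom(ν+μ, μ+1) · t^{μ+1}, where binom denotes the generalized binomial coefficient. (This is the scalar-argument core of the paper's Proposition on the lower bound J_{N,k,p}(sI_k) ≥ 1 − binom(ν+μ, μ+1)(1−s)^{μ+1}, with ν = k(N−k−p)/2, μ = max(0, ⌊(p−1)/2⌋), and t = 1−s.) -/

import Mathlib

noncomputable section

/-- The generalized binomial coefficient `binom(x, n) = x(x−1)⋯(x−n+1)/n!`. -/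
def rchoose (x : ℝ) (n : ℕ) : ℝ := (∏ i ∈ Finset.range n, (x - i)) / (n.factorial : ℝ)

lemma rchoose_zero (x : ℝ) : rchoose x 0 = 1 := by simp [rchoose]

lemma rchoose_nat_eq_zero (i n : ℕ) (h : i < n) : rchoose (i:ℝ) n = 0 := by
  unfold rchoose
  rw [Finset.prod_eq_zero (Finset.mem_range.mpr h) (by simp)]
  simp

lemma rchoose_rec (ν : ℝ) (ℓ : ℕ) :
    ((ℓ:ℝ)+1) * rchoose (ν + ℓ) (ℓ+1) = (ν + ℓ) * rchoose (ν + ℓ - 1) ℓ := by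
  have hprod : ∏ i ∈ Finset.range (ℓ+1), (ν + (ℓ:ℝ) - i)
      = (∏ i ∈ Finset.range ℓ, (ν + ℓ - 1 - i)) * (ν + ℓ) := by
    rw [Finset.prod_range_succ']
    congr 1
    · exact Finset.prod_congr rfl fun i _ => by push_cast; ring
    · push_cast; ring
  unfold rchoose
  rw [hprod, Nat.factorial_succ]
  have h0 : (ℓ.factorial : ℝ) ≠ 0 := by positivity
  push_cast
  field_simp

lemma rchoose_nonneg (ν : ℝ) (hν : 1 ≤ ν) (μ : ℕ) : 0 ≤ rchoose (ν + μ) (μ+1) := by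
  apply div_nonneg _ (by positivity)
  apply Finset.prod_nonneg
  intro i hi
  have : (i:ℝ) ≤ μ := by exact_mod_cast Nat.lt_succ_iff.mp (Finset.mem_range.mp hi)
  linarith

lemma key_identity (ν : ℝ) (μ : ℕ) (t : ℝ) :
    ν * (∑ ℓ ∈ Finset.range (μ+1), rchoose (ν + ℓ - 1) ℓ * t^ℓ)
      - (1 - t) * (∑ ℓ ∈ Finset.range μ, ((ℓ:ℝ)+1) * rchoose (ν + ℓ) (ℓ+1) * t^ℓ)
    = ((μ:ℝ)+1) * rchoose (ν + μ) (μ+1) * t^μ := by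
  induction μ with
  | zero => simp [rchoose]
  | succ μ ih =>
    rw [Finset.sum_range_succ (n := μ), Finset.sum_range_succ (n := μ+1)]
    have hrec := rchoose_rec ν (μ+1)
    push_cast at hrec ih ⊢
    rw [show ν + ((μ:ℝ) + 1) - 1 = ν + μ from by ring] at hrec
    rw [show ν + ((μ:ℝ) + 1) - 1 = ν + μ from by ring]
    linear_combination ih - t^(μ+1) * hrec


/-- Scalar core of the lower bound `J_{N,k,p}(sI_k) ≥ 1 − binom(ν+μ, μ+1)(1−s)^{μ+1}`:
for `ν = 0` or `ν ≥ 1` and `t ∈ [0,1]`,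
`(1−t)^ν · ∑_{ℓ=0}^{μ} binom(ν+ℓ−1, ℓ) t^ℓ ≥ 1 − binom(ν+μ, μ+1) t^{μ+1}`.
Here `(1−t)^ν` is the real power, with the convention `0^0 = 1`. -/
theorem scalar_lower_bound (μ : ℕ) (ν : ℝ) (hν : ν = 0 ∨ 1 ≤ ν)
    (t : ℝ) (ht : t ∈ Set.Icc (0 : ℝ) 1) :
    1 - rchoose (ν + μ) (μ + 1) * t ^ (μ + 1)
      ≤ (1 - t) ^ ν * ∑ ℓ ∈ Finset.range (μ + 1), rchoose (ν + ℓ - 1) ℓ * t ^ ℓ := by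
  obtain hν0 | hν1 := hν
  · -- case ν = 0
    subst hν0
    rw [Real.rpow_zero]
    have hC : rchoose ((0:ℝ) + μ) (μ + 1) = 0 := by
      rw [show (0:ℝ) + μ = (μ:ℝ) by ring]
      exact rchoose_nat_eq_zero μ (μ+1) (lt_add_one μ)
    have hS : ∑ ℓ ∈ Finset.range (μ + 1), rchoose ((0:ℝ) + ℓ - 1) ℓ * t ^ ℓ = 1 := by
      rw [Finset.sum_range_succ']
      have : ∀ i ∈ Finset.range μ, rchoose ((0:ℝ) + (i+1:ℕ) - 1) (i+1) * t ^ (i+1) = 0 := by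
        intro i _
        rw [show (0:ℝ) + (i+1:ℕ) - 1 = (i:ℝ) from by push_cast; ring,
          rchoose_nat_eq_zero i (i+1) (lt_add_one i), zero_mul]
      rw [Finset.sum_congr rfl this]
      simp [rchoose_zero]
    rw [hC, hS]
    norm_num
  · -- case 1 ≤ ν
    set C := rchoose (ν + μ) (μ + 1) with hCdef
    have hC : 0 ≤ C := rchoose_nonneg ν hν1 μ
    set f : ℝ → ℝ := fun s =>
      (1 - s) ^ ν * ∑ ℓ ∈ Finset.range (μ + 1), rchoose (ν + ℓ - 1) ℓ * s ^ ℓ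
        - 1 + C * s ^ (μ + 1) with hfdef
    set f' : ℝ → ℝ := fun x =>
      (-1 * ν * (1 - x) ^ (ν - 1)) * ∑ ℓ ∈ Finset.range (μ + 1), rchoose (ν + ℓ - 1) ℓ * x ^ ℓ
        + (1 - x) ^ ν * ∑ ℓ ∈ Finset.range μ, ((ℓ:ℝ)+1) * rchoose (ν + ℓ) (ℓ+1) * x ^ ℓ
        + C * ((μ + 1 : ℕ) * x ^ μ) with hf'def
    have hdiff : ∀ x : ℝ, HasDerivAt f (f' x) x := by
      intro x
      have hlin : HasDerivAt (fun s : ℝ => 1 - s) (-1) x := by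
        simpa using (hasDerivAt_id x).const_sub 1
      have hpow : HasDerivAt (fun s : ℝ => (1 - s) ^ ν) (-1 * ν * (1 - x) ^ (ν - 1)) x :=
        hlin.rpow_const (Or.inr hν1)
      have hsum : HasDerivAt
          (fun s : ℝ => ∑ ℓ ∈ Finset.range (μ + 1), rchoose (ν + ℓ - 1) ℓ * s ^ ℓ)
          (∑ ℓ ∈ Finset.range μ, ((ℓ:ℝ)+1) * rchoose (ν + ℓ) (ℓ+1) * x ^ ℓ) x := by
        have h1 : HasDerivAt
            (fun s : ℝ => ∑ ℓ ∈ Finset.range (μ + 1), rchoose (ν + ℓ - 1) ℓ * s ^ ℓ)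
            (∑ ℓ ∈ Finset.range (μ + 1), rchoose (ν + ℓ - 1) ℓ * ((ℓ:ℝ) * x ^ (ℓ-1))) x :=
          HasDerivAt.fun_sum fun ℓ _ => (hasDerivAt_pow ℓ x).const_mul _
        convert h1 using 1
        rw [Finset.sum_range_succ']
        simp only [Nat.cast_zero, zero_mul, mul_zero, add_zero, pow_zero]
        apply Finset.sum_congr rfl
        intro i _
        rw [show ν + ((i+1:ℕ):ℝ) - 1 = ν + i from by push_cast; ring]
        push_cast
        ring
      have hmono : HasDerivAt (fun s : ℝ => C * s ^ (μ+1)) (C * ((μ + 1 : ℕ) * x ^ μ)) x := by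
        simpa using (hasDerivAt_pow (μ+1) x).const_mul C
      exact ((hpow.mul hsum).sub_const 1).add hmono
    have hcont : Continuous f := by
      have : Differentiable ℝ f := fun x => (hdiff x).differentiableAt
      exact this.continuous
    have hmono : MonotoneOn f (Set.Icc (0:ℝ) 1) := by
      apply monotoneOn_of_deriv_nonneg (convex_Icc 0 1) hcont.continuousOn
      · intro x _
        exact (hdiff x).differentiableAt.differentiableWithinAt
      · intro x hx
        rw [interior_Icc] at hx
        obtain ⟨hx0, hx1⟩ := hx
        have h1x : (0:ℝ) < 1 - x := by linarith
        rw [(hdiff x).deriv]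
        have hsplit : (1 - x) ^ ν = (1 - x) ^ (ν - 1) * (1 - x) := by
          have h := Real.rpow_add h1x (ν-1) 1
          rw [Real.rpow_one, show ν - 1 + 1 = ν from by ring] at h
          exact h
        have hkey := key_identity ν μ x
        have e : f' x = ((μ:ℝ)+1) * C * x ^ μ * (1 - (1 - x) ^ (ν - 1)) := by
          rw [hf'def]
          simp only
          rw [hsplit]
          push_cast
          linear_combination (-(1-x)^(ν-1)) * hkey
        rw [e]
        have hle1 : (1 - x) ^ (ν - 1) ≤ 1 :=
          Real.rpow_le_one (by linarith) (by linarith) (by linarith)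
        have hxμ : (0:ℝ) ≤ x ^ μ := le_of_lt (pow_pos hx0 μ)
        have h4 : (0:ℝ) ≤ 1 - (1 - x) ^ (ν - 1) := sub_nonneg.mpr hle1
        have h5 : (0:ℝ) ≤ ((μ:ℝ)+1) := by positivity
        exact mul_nonneg (mul_nonneg (mul_nonneg h5 hC) hxμ) h4
    have hf0 : f 0 = 0 := by
      rw [hfdef]
      simp only
      rw [Finset.sum_range_succ']
      norm_num [rchoose_zero, Real.one_rpow]
    have := hmono (Set.left_mem_Icc.mpr zero_le_one) ht ht.1
    rw [hf0, hfdef] at this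
    simp only at this
    linarith
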